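/- Let 𝒮 be a symmetric q×q real matrix with positive entries and let v be a positive vector with Σ_a v_a 𝒮_{a,b} = v_b for all b, normalized by Σ_a v_a = 1; define entropies S_a by v_a = e^{−S_a/2}. Let W(x) = v_{x_0} 𝒮_{x_0,x_1} v_{x_1}^{−1}, and for a basepoint x ∈ Λ define cylinder weights μ_{W,x}(Λ(w)) = Π_{j=1}^m W(w_j · w_{j−1} ⋯ w_1 · x) for finite words w = (w_1,…,w_m). Define the process Φ_{x,a}(m) := e^{S_a/2} Σ_{u ∈ 𝔄^{m−1}} μ_{W,x}(Λ(u·a)), the sum being over all words of length m whose last letter is a. Then for all m ≥ 1 and all a ∈ 𝔄, Φ_{x,a}(m+1) = Σ_{b∈𝔄} 𝒮_{a,b} Φ_{x,b}(m); i.e., the multifractal measure determined by W defines a stochastic process on the Eternal Symmetree without pruning governed by the stochastic matrix 𝒮. -/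

import Mathlib

/-- Prepend a letter `a` to a sequence `x`. -/
def prepend {q : ℕ} (a : Fin q) (x : ℕ → Fin q) : ℕ → Fin q
  | 0 => a
  | n + 1 => x n

/-- `prependStage w x j` is the sequence `w_j · w_{j-1} ⋯ w_1 · x`. -/
def prependStage {q : ℕ} (w : ℕ → Fin q) (x : ℕ → Fin q) : ℕ → ℕ → Fin q
  | 0 => x
  | j + 1 => prepend (w j) (prependStage w x j)

/-- The multifractal cylinder weight
`μ_{W,x}(Λ(w)) = ∏_{j=1}^m W(w_j · w_{j-1} ⋯ w_1 · x)` of a word of length `m`. -/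
noncomputable def mucyl {q : ℕ} (W : (ℕ → Fin q) → ℝ) (x : ℕ → Fin q)
    (m : ℕ) (w : ℕ → Fin q) : ℝ :=
  ∏ j ∈ Finset.range m, W (prependStage w x (j + 1))

/-- The process `Φ_{x,a}(m) = e^{S_a/2} ∑_{u ∈ 𝔄^{m-1}} μ_{W,x}(Λ(u·a))`, the sum
over all words of length `m` whose last letter is `a`. -/
noncomputable def PhiProc {q : ℕ} (W : (ℕ → Fin q) → ℝ) (Ent : Fin q → ℝ)
    (x : ℕ → Fin q) (a : Fin q) (m : ℕ) : ℝ :=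
  Real.exp (Ent a / 2) *
    ∑ u : Fin (m - 1) → Fin q,
      mucyl W x m (fun i => if h : i < m - 1 then u ⟨i, h⟩ else a)

lemma prependStage_congr {q : ℕ} (w w' x : ℕ → Fin q) (j : ℕ)
    (h : ∀ i < j, w i = w' i) : prependStage w x j = prependStage w' x j := by
  induction j with
  | zero => rfl
  | succ j ih =>
    simp only [prependStage, h j (Nat.lt_succ_self j),
      ih (fun i hi => h i (hi.trans (Nat.lt_succ_self j)))]

lemma mucyl_congr {q : ℕ} (W : (ℕ → Fin q) → ℝ) (x : ℕ → Fin q) (m : ℕ)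
    (w w' : ℕ → Fin q) (h : ∀ i < m, w i = w' i) :
    mucyl W x m w = mucyl W x m w' := by
  unfold mucyl
  refine Finset.prod_congr rfl fun j hj => ?_
  rw [prependStage_congr w w' x (j + 1)
    (fun i hi => h i (lt_of_le_of_lt (Nat.lt_succ_iff.mp hi) (Finset.mem_range.mp hj)))]

/-- The multifractal measure of the Keane potential
`W(x) = v_{x₀} 𝒮_{x₀,x₁} v_{x₁}⁻¹` defines a stochastic process on the Eternal
Symmetree without pruning: `Φ_{x,a}(m+1) = ∑_b 𝒮_{a,b} Φ_{x,b}(m)`. -/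
theorem stmt3 (q : ℕ) (hq : 2 ≤ q) (M : Matrix (Fin q) (Fin q) ℝ)
    (hpos : ∀ a b, 0 < M a b) (hsymm : M.IsSymm)
    (v : Fin q → ℝ) (hv : ∀ a, 0 < v a)
    (hleft : ∀ b, ∑ a, v a * M a b = v b)
    (hnorm : ∑ a, v a = 1)
    (Ent : Fin q → ℝ) (hEnt : ∀ a, v a = Real.exp (-(Ent a) / 2))
    (W : (ℕ → Fin q) → ℝ)
    (hW : ∀ x, W x = v (x 0) * M (x 0) (x 1) * (v (x 1))⁻¹)
    (x : ℕ → Fin q) :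
    ∀ m ≥ 1, ∀ a : Fin q,
      PhiProc W Ent x a (m + 1) = ∑ b : Fin q, M a b * PhiProc W Ent x b m := by
  intro m hm a
  obtain ⟨n, rfl⟩ : ∃ n, m = n + 1 := ⟨m - 1, (Nat.succ_pred_eq_of_pos hm).symm⟩
  have hva : Real.exp (Ent a / 2) * v a = 1 := by
    rw [hEnt a, ← Real.exp_add]; ring_nf; exact Real.exp_zero
  have hvinv : ∀ b : Fin q, (v b)⁻¹ = Real.exp (Ent b / 2) := by
    intro b
    rw [hEnt b, ← Real.exp_neg]
    ring_nf
  -- abbreviate words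
  set F : (Fin (n + 1) → Fin q) → (ℕ → Fin q) :=
    fun u i => if h : i < n + 1 then u ⟨i, h⟩ else a with hF
  have e1 : PhiProc W Ent x a (n + 1 + 1)
      = Real.exp (Ent a / 2) * ∑ u : Fin (n + 1) → Fin q, mucyl W x (n + 2) (F u) := rfl
  -- split off the last factor
  have e2 : ∀ u : Fin (n + 1) → Fin q,
      mucyl W x (n + 2) (F u)
        = mucyl W x (n + 1) (F u) *
          (v a * M a (u (Fin.last n)) * (v (u (Fin.last n)))⁻¹) := by
    intro u
    have hlast : F u (n + 1) = a := by simp [hF]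
    have hprev : prependStage (F u) x (n + 1) 0 = u (Fin.last n) := by
      show F u n = u (Fin.last n)
      simp [hF, Fin.last]
    unfold mucyl
    rw [Finset.prod_range_succ, hW]
    have h0 : prependStage (F u) x (n + 1 + 1) 0 = F u (n + 1) := rfl
    have h1 : prependStage (F u) x (n + 1 + 1) 1 = prependStage (F u) x (n + 1) 0 := rfl
    rw [h0, h1, hlast, hprev]
  rw [e1]
  simp only [e2]
  -- reindex via snoc
  rw [← Equiv.sum_comp (Fin.snocEquiv (fun _ : Fin (n + 1) => Fin q))]
  rw [Fintype.sum_prod_type]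
  have e3 : ∀ (b : Fin q) (u' : Fin n → Fin q),
      mucyl W x (n + 1) (F (Fin.snocEquiv (fun _ => Fin q) (b, u')))
        = mucyl W x (n + 1) (fun i => if h : i < n then u' ⟨i, h⟩ else b) := by
    intro b u'
    apply mucyl_congr
    intro i hi
    rcases Nat.lt_or_ge i n with h | h
    · simp [hF, Fin.snocEquiv_apply, Fin.snoc, h, h.le, h.trans (Nat.lt_succ_self n)]
    · have hi' : i = n := le_antisymm (Nat.lt_succ_iff.mp hi) h
      subst hi'
      simp [hF, Fin.snocEquiv_apply, Fin.snoc]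
  have e4 : ∀ b u', (Fin.snocEquiv (fun _ : Fin (n+1) => Fin q) (b, u')) (Fin.last n) = b :=
    fun b u' => by simp [Fin.snocEquiv_apply]
  calc Real.exp (Ent a / 2) * ∑ b : Fin q, ∑ u' : Fin n → Fin q,
        mucyl W x (n + 1) (F (Fin.snocEquiv (fun _ => Fin q) (b, u'))) *
          (v a * M a ((Fin.snocEquiv (fun _ => Fin q) (b, u')) (Fin.last n)) *
            (v ((Fin.snocEquiv (fun _ => Fin q) (b, u')) (Fin.last n)))⁻¹)
      = ∑ b : Fin q, M a b * (Real.exp (Ent b / 2) * ∑ u' : Fin n → Fin q,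
          mucyl W x (n + 1) (fun i => if h : i < n then u' ⟨i, h⟩ else b)) := by
        rw [Finset.mul_sum]
        refine Finset.sum_congr rfl fun b _ => ?_
        simp only [e3, e4, hvinv b, Finset.mul_sum]
        refine Finset.sum_congr rfl fun u' _ => ?_
        linear_combination (mucyl W x (n + 1)
          (fun i => if h : i < n then u' ⟨i, h⟩ else b) * M a b *
            Real.exp (Ent b / 2)) * hva
    _ = ∑ b : Fin q, M a b * PhiProc W Ent x b (n + 1) := rfl
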